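/- Let (x,u) be admissible for the permanent optimal control problem, and let (p,p⁰) ∈ AC([0,T],ℝ^n) × ℝ_- be a nontrivial pair satisfying the adjoint equation ṗ(t) = −∇_x f(x(t),u(t),t)^⊤ p(t) − p⁰ ∇_x L(x(t),u(t),t) a.e. Then (p,p⁰) satisfies the Hamiltonian gradient condition ∇_u H(x(t),u(t),p(t),p⁰,t) ∈ N_U[u(t)] for a.e. t ∈ [0,T] if and only if ⟨p(T), w(T,u,v−u)⟩ + p⁰ w⁰(T,u,v−u) ≤ 0 for every v ∈ L^∞([0,T],U), where w(·,u,v−u) and w⁰(·,u,v−u) are the variation vectors solving the linearized state and cost equations with perturbation v−u. -/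

import Mathlib

open MeasureTheory Set Filter Topology
open scoped RealInnerProductSpace

variable {E F : Type*} [NormedAddCommGroup E] [InnerProductSpace ℝ E] [CompleteSpace E]
  [NormedAddCommGroup F] [InnerProductSpace ℝ F] [CompleteSpace F]

lemma grad_real_apply (g : E → ℝ) (x h : E) : ⟪gradient g x, h⟫ = fderiv ℝ g x h := by
  unfold gradient
  exact InnerProductSpace.toDual_symm_apply

lemma grad_inner_apply {g : E → F} {x : E} (hg : DifferentiableAt ℝ g x) (c : F) (h : E) :
    ⟪gradient (fun y => ⟪c, g y⟫) x, h⟫ = ⟪c, fderiv ℝ g x h⟫ := by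
  rw [grad_real_apply, fderiv_inner_apply (𝕜 := ℝ) (differentiableAt_const c) hg]
  simp

lemma prim_cont {T : ℝ} {W : ℝ → E} (hW : IntegrableOn W (Icc 0 T)) (c : E) {w : ℝ → E}
    (hw : ∀ t ∈ Icc (0:ℝ) T, w t = c + ∫ s in (0:ℝ)..t, W s) :
    ContinuousOn w (Icc 0 T) := by
  have h1 : ContinuousOn (fun t => c + ∫ s in Ioc (0:ℝ) t, W s) (Icc 0 T) :=
    continuousOn_const.add (intervalIntegral.continuousOn_primitive hW)
  refine h1.congr fun t ht => ?_
  rw [hw t ht, intervalIntegral.integral_of_le ht.1]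

lemma inner_integrable {α : Type*} [MeasurableSpace α] {μ : Measure α} {P w : α → E}
    (hP : Integrable P μ) (hwm : AEStronglyMeasurable w μ) {C : ℝ}
    (hC : ∀ᵐ s ∂μ, ‖w s‖ ≤ C) : Integrable (fun s => ⟪P s, w s⟫) μ := by
  refine Integrable.mono' (hP.norm.mul_const C) (hP.aestronglyMeasurable.inner hwm) ?_
  filter_upwards [hC] with s hs
  exact (norm_inner_le_norm _ _).trans (mul_le_mul_of_nonneg_left hs (norm_nonneg _))

set_option maxHeartbeats 1000000 in
lemma parts {T : ℝ} (hT : 0 ≤ T) {P W p w : ℝ → E}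
    (hP : IntegrableOn P (Ioc 0 T)) (hW : IntegrableOn W (Ioc 0 T))
    (hp : ∀ t ∈ Icc (0:ℝ) T, p t = p 0 + ∫ s in Ioc (0:ℝ) t, P s)
    (hw : ∀ t ∈ Icc (0:ℝ) T, w t = ∫ s in Ioc (0:ℝ) t, W s)
    (hPw : Integrable (fun s => ⟪P s, w s⟫) (volume.restrict (Ioc 0 T)))
    (hpW : Integrable (fun s => ⟪p s, W s⟫) (volume.restrict (Ioc 0 T))) :
    ⟪p T, w T⟫ = ∫ s in Ioc (0:ℝ) T, (⟪P s, w s⟫ + ⟪p s, W s⟫) := by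
  set μ := volume.restrict (Ioc (0:ℝ) T) with hμ
  have hTmem : T ∈ Icc (0:ℝ) T := ⟨hT, le_rfl⟩
  -- pointwise splitting
  have hJ : ∀ s ∈ Ioc (0:ℝ) T,
      ⟪P s, w T⟫ - ⟪P s, w s⟫ = ∫ σ in Ioc s T, ⟪P s, W σ⟫ := by
    intro s hs
    have hsplit : (∫ σ in Ioc (0:ℝ) T, W σ) = (∫ σ in Ioc (0:ℝ) s, W σ) + ∫ σ in Ioc s T, W σ := by
      rw [← setIntegral_union (Set.Ioc_disjoint_Ioc_of_le le_rfl) measurableSet_Ioc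
        (hW.mono_set (Ioc_subset_Ioc_right hs.2)) (hW.mono_set (Ioc_subset_Ioc_left hs.1.le)),
        Ioc_union_Ioc_eq_Ioc hs.1.le hs.2]
    have h1 : w T = w s + ∫ σ in Ioc s T, W σ := by
      rw [hw T hTmem, hw s ⟨hs.1.le, hs.2⟩, hsplit]
    rw [h1, inner_add_right, integral_inner (hW.mono_set (Ioc_subset_Ioc_left hs.1.le)) (P s)]
    ring
  -- the kernel
  set k : ℝ → ℝ → ℝ := fun s σ => if s < σ then ⟪P s, W σ⟫ else 0 with hk
  have hkint : Integrable (Function.uncurry k) (μ.prod μ) := by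
    have hmeas : AEStronglyMeasurable (fun z : ℝ × ℝ => ⟪P z.1, W z.2⟫) (μ.prod μ) :=
      hP.aestronglyMeasurable.comp_fst.inner hW.aestronglyMeasurable.comp_snd
    have hset : MeasurableSet {z : ℝ × ℝ | z.1 < z.2} := measurableSet_lt measurable_fst measurable_snd
    have hueq : Function.uncurry k = {z : ℝ × ℝ | z.1 < z.2}.indicator (fun z => ⟪P z.1, W z.2⟫) := by
      ext z; simp only [Function.uncurry, hk, Set.indicator_apply, Set.mem_setOf_eq]
    rw [hueq]
    refine Integrable.mono' (hP.norm.mul_prod hW.norm) (hmeas.indicator hset) ?_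
    filter_upwards with z
    exact (norm_indicator_le_norm_self _ _).trans (norm_inner_le_norm _ _)
  have hswap := integral_integral_swap hkint
  -- evaluate inner integrals
  have hLeval : ∀ s ∈ Ioc (0:ℝ) T, (∫ σ, k s σ ∂μ) = ∫ σ in Ioc s T, ⟪P s, W σ⟫ := by
    intro s hs
    have h1 : (fun σ => k s σ) = (Ioi s).indicator (fun σ => ⟪P s, W σ⟫) := by
      ext σ; simp [hk, Set.indicator_apply, mem_Ioi]
    have h2 : Ioc (0:ℝ) T ∩ Ioi s = Ioc s T := by
      ext y
      simp only [mem_inter_iff, mem_Ioc, mem_Ioi]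
      exact ⟨fun h => ⟨h.2, h.1.2⟩, fun h => ⟨⟨hs.1.trans h.1, h.2⟩, h.1⟩⟩
    rw [h1, hμ, setIntegral_indicator measurableSet_Ioi, h2]
  have hReval : ∀ σ ∈ Ioc (0:ℝ) T, (∫ s, k s σ ∂μ) = ⟪p σ, W σ⟫ - ⟪p 0, W σ⟫ := by
    intro σ hσ
    have h1 : (fun s => k s σ) = (Iio σ).indicator (fun s => ⟪P s, W σ⟫) := by
      ext s; simp [hk, Set.indicator_apply, mem_Iio]
    have h2 : Ioc (0:ℝ) T ∩ Iio σ = Ioo 0 σ := by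
      ext y
      simp only [mem_inter_iff, mem_Ioc, mem_Iio, mem_Ioo]
      exact ⟨fun h => ⟨h.1.1, h.2⟩, fun h => ⟨⟨h.1, h.2.le.trans hσ.2⟩, h.2⟩⟩
    have h3 : (∫ s in Ioo (0:ℝ) σ, ⟪P s, W σ⟫) = ∫ s in Ioc (0:ℝ) σ, ⟪P s, W σ⟫ :=
      (integral_Ioc_eq_integral_Ioo).symm
    have h4 : (∫ s in Ioc (0:ℝ) σ, ⟪P s, W σ⟫) = ⟪(∫ s in Ioc (0:ℝ) σ, P s), W σ⟫ := by
      rw [show (fun s => (⟪P s, W σ⟫ : ℝ)) = fun s => ⟪W σ, P s⟫ by ext s; rw [real_inner_comm],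
        integral_inner (hP.mono_set (Ioc_subset_Ioc_right hσ.2)) (W σ), real_inner_comm]
    have h5 : (∫ s in Ioc (0:ℝ) σ, P s) = p σ - p 0 := by
      rw [hp σ ⟨hσ.1.le, hσ.2⟩]; abel
    rw [h1, hμ, setIntegral_indicator measurableSet_Iio, h2, h3, h4, h5, inner_sub_left]
  -- put things together
  have hPwT : Integrable (fun s => ⟪P s, w T⟫) μ := hP.inner_const (w T)
  have hp0W : Integrable (fun s => ⟪p 0, W s⟫) μ := hW.const_inner (p 0)
  have hA : (∫ s, (⟪P s, w T⟫ - ⟪P s, w s⟫) ∂μ) = ∫ σ, (⟪p σ, W σ⟫ - ⟪p 0, W σ⟫) ∂μ := by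
    calc (∫ s, (⟪P s, w T⟫ - ⟪P s, w s⟫) ∂μ) = ∫ s, (∫ σ, k s σ ∂μ) ∂μ := by
          refine integral_congr_ae ?_
          filter_upwards [ae_restrict_mem measurableSet_Ioc] with s hs
          rw [hJ s hs, hLeval s hs]
      _ = ∫ σ, (∫ s, k s σ ∂μ) ∂μ := hswap
      _ = ∫ σ, (⟪p σ, W σ⟫ - ⟪p 0, W σ⟫) ∂μ := by
          refine integral_congr_ae ?_
          filter_upwards [ae_restrict_mem measurableSet_Ioc] with σ hσ
          rw [hReval σ hσ]
  rw [integral_sub hPwT hPw, integral_sub hpW hp0W] at hA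
  have hB : (∫ s, ⟪P s, w T⟫ ∂μ) = ⟪p T, w T⟫ - ⟪p 0, w T⟫ := by
    have : (∫ s, ⟪P s, w T⟫ ∂μ) = ⟪(∫ s, P s ∂μ), w T⟫ := by
      rw [show (fun s => (⟪P s, w T⟫ : ℝ)) = fun s => ⟪w T, P s⟫ by ext s; rw [real_inner_comm],
        integral_inner hP (w T), real_inner_comm]
    rw [this, show (∫ s, P s ∂μ) = p T - p 0 by rw [hp T hTmem]; abel, inner_sub_left]
  have hC : (∫ s, ⟪p 0, W s⟫ ∂μ) = ⟪p 0, w T⟫ := by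
    rw [integral_inner hW (p 0), ← hw T hTmem]
  rw [integral_add hPw hpW]
  rw [hB, hC] at hA
  linarith
/-- Characterization of weak extremal lifts (permanent case): a nontrivial pair `(p,p⁰)`
satisfying the adjoint equation satisfies the Hamiltonian gradient condition
`∇_u H(x(t),u(t),p(t),p⁰,t) ∈ N_U[u(t)]` a.e. if and only if
`⟨p(T), w(T,u,v−u)⟩ + p⁰ w⁰(T,u,v−u) ≤ 0` for every `v ∈ L^∞([0,T],U)`. -/
theorem stmt_10 (T : ℝ) (hT : 0 < T) (n m : ℕ) (hn : 0 < n) (hm : 0 < m)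
    (x0 xT : EuclideanSpace ℝ (Fin n))
    (U : Set (EuclideanSpace ℝ (Fin m))) (hUne : U.Nonempty)
    (hUclosed : IsClosed U) (hUconvex : Convex ℝ U)
    (f : EuclideanSpace ℝ (Fin n) → EuclideanSpace ℝ (Fin m) → ℝ → EuclideanSpace ℝ (Fin n))
    (L : EuclideanSpace ℝ (Fin n) → EuclideanSpace ℝ (Fin m) → ℝ → ℝ)
    (hf : ContDiff ℝ 2 (fun q : EuclideanSpace ℝ (Fin n) × EuclideanSpace ℝ (Fin m) × ℝ =>
      f q.1 q.2.1 q.2.2))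
    (hL : ContDiff ℝ 2 (fun q : EuclideanSpace ℝ (Fin n) × EuclideanSpace ℝ (Fin m) × ℝ =>
      L q.1 q.2.1 q.2.2))
    -- the class L^∞([0,T],U) of controls
    (LinfU : (ℝ → EuclideanSpace ℝ (Fin m)) → Prop)
    (hLinfU : ∀ v, LinfU v ↔
      (AEStronglyMeasurable v (volume.restrict (Icc 0 T)) ∧
       (∀ᵐ s ∂(volume.restrict (Icc (0:ℝ) T)), v s ∈ U) ∧
       ∃ Mv, ∀ᵐ s ∂(volume.restrict (Icc (0:ℝ) T)), ‖v s‖ ≤ Mv))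
    -- the admissible pair (x,u)
    (x : ℝ → EuclideanSpace ℝ (Fin n)) (u : ℝ → EuclideanSpace ℝ (Fin m))
    (hu : LinfU u)
    (hxint : IntegrableOn (fun s => f (x s) (u s) s) (Icc 0 T))
    (hxode : ∀ t ∈ Icc (0:ℝ) T, x t = x0 + ∫ s in (0:ℝ)..t, f (x s) (u s) s)
    (hxT : x T = xT)
    -- the nontrivial pair (p,p⁰) satisfying the adjoint equation
    (p : ℝ → EuclideanSpace ℝ (Fin n)) (p0 : ℝ) (hp0 : p0 ≤ 0)
    (hnontriv : ¬ (p0 = 0 ∧ ∀ t ∈ Icc (0:ℝ) T, p t = 0))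
    (hpint : IntegrableOn (fun s =>
      -(gradient (fun y => ⟪p s, f y (u s) s⟫) (x s))
        - p0 • gradient (fun y => L y (u s) s) (x s)) (Icc 0 T))
    (hpode : ∀ t ∈ Icc (0:ℝ) T, p t = p 0 + ∫ s in (0:ℝ)..t,
      (-(gradient (fun y => ⟪p s, f y (u s) s⟫) (x s))
        - p0 • gradient (fun y => L y (u s) s) (x s)))
    -- the variation vectors w(·,u,v−u) and w⁰(·,u,v−u)
    (w : (ℝ → EuclideanSpace ℝ (Fin m)) → ℝ → EuclideanSpace ℝ (Fin n))
    (w0 : (ℝ → EuclideanSpace ℝ (Fin m)) → ℝ → ℝ)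
    (hwint : ∀ v, LinfU v → IntegrableOn (fun s =>
      (fderiv ℝ (fun y => f y (u s) s) (x s)) (w v s)
        + (fderiv ℝ (fun ω => f (x s) ω s) (u s)) (v s - u s)) (Icc 0 T))
    (hw : ∀ v, LinfU v → ∀ t ∈ Icc (0:ℝ) T, w v t = ∫ s in (0:ℝ)..t,
      ((fderiv ℝ (fun y => f y (u s) s) (x s)) (w v s)
        + (fderiv ℝ (fun ω => f (x s) ω s) (u s)) (v s - u s)))
    (hw0int : ∀ v, LinfU v → IntegrableOn (fun s =>
      ⟪gradient (fun y => L y (u s) s) (x s), w v s⟫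
        + ⟪gradient (fun ω => L (x s) ω s) (u s), v s - u s⟫) (Icc 0 T))
    (hw0 : ∀ v, LinfU v → ∀ t ∈ Icc (0:ℝ) T, w0 v t = ∫ s in (0:ℝ)..t,
      (⟪gradient (fun y => L y (u s) s) (x s), w v s⟫
        + ⟪gradient (fun ω => L (x s) ω s) (u s), v s - u s⟫)) :
    -- Hamiltonian gradient condition ⟺ variational inequality
    ((∀ᵐ t ∂(volume.restrict (Icc (0:ℝ) T)), ∀ ω ∈ U,
        ⟪gradient (fun ψ => ⟪p t, f (x t) ψ t⟫ + p0 * L (x t) ψ t) (u t), ω - u t⟫ ≤ 0)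
      ↔ (∀ v, LinfU v → ⟪p T, w v T⟫ + p0 * w0 v T ≤ 0)) := by
  classical
  have hT' : (0:ℝ) ≤ T := hT.le
  have hTmem : T ∈ Icc (0:ℝ) T := ⟨hT', le_rfl⟩
  set μ := volume.restrict (Ioc (0:ℝ) T) with hμdef
  have hmeq : volume.restrict (Icc (0:ℝ) T) = μ :=
    (Measure.restrict_congr_set Ioc_ae_eq_Icc).symm
  obtain ⟨hum, huU, Mu, huM⟩ := (hLinfU u).1 hu
  -- differentiability of the sections of f and L
  have hfd : Differentiable ℝ
      (fun q : EuclideanSpace ℝ (Fin n) × EuclideanSpace ℝ (Fin m) × ℝ => f q.1 q.2.1 q.2.2) :=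
    hf.differentiable (by norm_num)
  have hLd : Differentiable ℝ
      (fun q : EuclideanSpace ℝ (Fin n) × EuclideanSpace ℝ (Fin m) × ℝ => L q.1 q.2.1 q.2.2) :=
    hL.differentiable (by norm_num)
  have hfy : ∀ (c : EuclideanSpace ℝ (Fin m)) (t : ℝ), Differentiable ℝ (fun y => f y c t) :=
    fun c t => hfd.comp (differentiable_id.prodMk (differentiable_const (c, t)))
  have hfω : ∀ (y : EuclideanSpace ℝ (Fin n)) (t : ℝ), Differentiable ℝ (fun ω => f y ω t) :=
    fun y t => hfd.comp ((differentiable_const y).prodMk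
      (differentiable_id.prodMk (differentiable_const t)))
  have hLω : ∀ (y : EuclideanSpace ℝ (Fin n)) (t : ℝ), Differentiable ℝ (fun ω => L y ω t) :=
    fun y t => hLd.comp ((differentiable_const y).prodMk
      (differentiable_id.prodMk (differentiable_const t)))
  -- pointwise algebraic identity
  have hpoint : ∀ (s : ℝ) (z : EuclideanSpace ℝ (Fin n)) (d : EuclideanSpace ℝ (Fin m)),
      ⟪-(gradient (fun y => ⟪p s, f y (u s) s⟫) (x s))
          - p0 • gradient (fun y => L y (u s) s) (x s), z⟫
        + ⟪p s, (fderiv ℝ (fun y => f y (u s) s) (x s)) z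
            + (fderiv ℝ (fun ω => f (x s) ω s) (u s)) d⟫
        + p0 * (⟪gradient (fun y => L y (u s) s) (x s), z⟫
            + ⟪gradient (fun ω => L (x s) ω s) (u s), d⟫)
      = ⟪gradient (fun ψ => ⟪p s, f (x s) ψ s⟫ + p0 * L (x s) ψ s) (u s), d⟫ := by
    intro s z d
    have h1 : ⟪gradient (fun y => ⟪p s, f y (u s) s⟫) (x s), z⟫
        = ⟪p s, (fderiv ℝ (fun y => f y (u s) s) (x s)) z⟫ :=
      grad_inner_apply ((hfy (u s) s) (x s)) (p s) z
    have hd1 : DifferentiableAt ℝ (fun ψ => (⟪p s, f (x s) ψ s⟫ : ℝ)) (u s) :=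
      (differentiableAt_const (p s)).inner ℝ ((hfω (x s) s) (u s))
    have hd2 : DifferentiableAt ℝ (fun ψ => p0 * L (x s) ψ s) (u s) :=
      ((hLω (x s) s) (u s)).const_mul p0
    have h2 : ⟪gradient (fun ψ => ⟪p s, f (x s) ψ s⟫ + p0 * L (x s) ψ s) (u s), d⟫
        = ⟪p s, (fderiv ℝ (fun ω => f (x s) ω s) (u s)) d⟫
          + p0 * ⟪gradient (fun ω => L (x s) ω s) (u s), d⟫ := by
      rw [grad_real_apply, fderiv_fun_add hd1 hd2, ContinuousLinearMap.add_apply,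
        fderiv_inner_apply (𝕜 := ℝ) (differentiableAt_const (p s)) ((hfω (x s) s) (u s)),
        fderiv_const_mul ((hLω (x s) s) (u s)) p0, ContinuousLinearMap.smul_apply,
        smul_eq_mul, grad_real_apply]
      simp
    rw [h2]
    simp only [inner_sub_left, inner_neg_left, real_inner_smul_left, inner_add_right, h1]
    ring
    -- the fundamental identity
  have key : ∀ v, LinfU v →
      Integrable (fun s => ⟪gradient (fun ψ => ⟪p s, f (x s) ψ s⟫
          + p0 * L (x s) ψ s) (u s), v s - u s⟫) μ ∧
      ⟪p T, w v T⟫ + p0 * w0 v T = ∫ s, ⟪gradient (fun ψ => ⟪p s, f (x s) ψ s⟫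
          + p0 * L (x s) ψ s) (u s), v s - u s⟫ ∂μ := by
    intro v hv
    have hP' : IntegrableOn (fun s => -(gradient (fun y => ⟪p s, f y (u s) s⟫) (x s))
        - p0 • gradient (fun y => L y (u s) s) (x s)) (Ioc 0 T) :=
      hpint.mono_set Ioc_subset_Icc_self
    have hWv : IntegrableOn (fun s => (fderiv ℝ (fun y => f y (u s) s) (x s)) (w v s)
        + (fderiv ℝ (fun ω => f (x s) ω s) (u s)) (v s - u s)) (Ioc 0 T) :=
      (hwint v hv).mono_set Ioc_subset_Icc_self
    have hW0v : IntegrableOn (fun s => ⟪gradient (fun y => L y (u s) s) (x s), w v s⟫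
        + ⟪gradient (fun ω => L (x s) ω s) (u s), v s - u s⟫) (Ioc 0 T) :=
      (hw0int v hv).mono_set Ioc_subset_Icc_self
    have hpode' : ∀ t ∈ Icc (0:ℝ) T, p t = p 0 + ∫ s in Ioc (0:ℝ) t,
        (-(gradient (fun y => ⟪p s, f y (u s) s⟫) (x s))
          - p0 • gradient (fun y => L y (u s) s) (x s)) := fun t ht => by
      rw [hpode t ht, intervalIntegral.integral_of_le ht.1]
    have hwode' : ∀ t ∈ Icc (0:ℝ) T, w v t = ∫ s in Ioc (0:ℝ) t,
        ((fderiv ℝ (fun y => f y (u s) s) (x s)) (w v s)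
          + (fderiv ℝ (fun ω => f (x s) ω s) (u s)) (v s - u s)) := fun t ht => by
      rw [hw v hv t ht, intervalIntegral.integral_of_le ht.1]
    have hpc : ContinuousOn p (Icc 0 T) := prim_cont hpint (p 0) hpode
    have hwc : ContinuousOn (w v) (Icc 0 T) :=
      prim_cont (hwint v hv) 0 (fun t ht => by rw [hw v hv t ht, zero_add])
    obtain ⟨Cp, hCp⟩ := isCompact_Icc.exists_bound_of_continuousOn hpc
    obtain ⟨Cw, hCw⟩ := isCompact_Icc.exists_bound_of_continuousOn hwc
    have hpm : AEStronglyMeasurable p μ :=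
      (hpc.aestronglyMeasurable measurableSet_Icc).mono_measure
        (Measure.restrict_mono Ioc_subset_Icc_self le_rfl)
    have hwm : AEStronglyMeasurable (w v) μ :=
      (hwc.aestronglyMeasurable measurableSet_Icc).mono_measure
        (Measure.restrict_mono Ioc_subset_Icc_self le_rfl)
    have haew : ∀ᵐ s ∂μ, ‖w v s‖ ≤ Cw := by
      filter_upwards [ae_restrict_mem measurableSet_Ioc] with s hs
      exact hCw s (Ioc_subset_Icc_self hs)
    have haep : ∀ᵐ s ∂μ, ‖p s‖ ≤ Cp := by
      filter_upwards [ae_restrict_mem measurableSet_Ioc] with s hs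
      exact hCp s (Ioc_subset_Icc_self hs)
    have hPw : Integrable (fun s => ⟪-(gradient (fun y => ⟪p s, f y (u s) s⟫) (x s))
        - p0 • gradient (fun y => L y (u s) s) (x s), w v s⟫) μ :=
      inner_integrable hP' hwm haew
    have hpW : Integrable (fun s => ⟪p s, (fderiv ℝ (fun y => f y (u s) s) (x s)) (w v s)
        + (fderiv ℝ (fun ω => f (x s) ω s) (u s)) (v s - u s)⟫) μ :=
      (inner_integrable hWv hpm haep).congr
        (Eventually.of_forall (fun s => real_inner_comm _ _))
    have hparts := parts hT' hP' hWv hpode' hwode' hPw hpW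
    have hw0T : p0 * w0 v T = ∫ s, (p0 * (⟪gradient (fun y => L y (u s) s) (x s), w v s⟫
        + ⟪gradient (fun ω => L (x s) ω s) (u s), v s - u s⟫)) ∂μ := by
      rw [hw0 v hv T hTmem, intervalIntegral.integral_of_le hT']
      exact (integral_const_mul p0 _).symm
    have hsum : Integrable (fun s =>
        (⟪-(gradient (fun y => ⟪p s, f y (u s) s⟫) (x s))
            - p0 • gradient (fun y => L y (u s) s) (x s), w v s⟫
          + ⟪p s, (fderiv ℝ (fun y => f y (u s) s) (x s)) (w v s)
            + (fderiv ℝ (fun ω => f (x s) ω s) (u s)) (v s - u s)⟫)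
        + p0 * (⟪gradient (fun y => L y (u s) s) (x s), w v s⟫
            + ⟪gradient (fun ω => L (x s) ω s) (u s), v s - u s⟫)) μ :=
      (hPw.add hpW).add (hW0v.const_mul p0)
    have hfuneq : (fun s =>
        (⟪-(gradient (fun y => ⟪p s, f y (u s) s⟫) (x s))
            - p0 • gradient (fun y => L y (u s) s) (x s), w v s⟫
          + ⟪p s, (fderiv ℝ (fun y => f y (u s) s) (x s)) (w v s)
            + (fderiv ℝ (fun ω => f (x s) ω s) (u s)) (v s - u s)⟫)
        + p0 * (⟪gradient (fun y => L y (u s) s) (x s), w v s⟫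
            + ⟪gradient (fun ω => L (x s) ω s) (u s), v s - u s⟫))
        = fun s => ⟪gradient (fun ψ => ⟪p s, f (x s) ψ s⟫
            + p0 * L (x s) ψ s) (u s), v s - u s⟫ := by
      funext s
      have := hpoint s (w v s) (v s - u s)
      linarith [hpoint s (w v s) (v s - u s)]
    refine ⟨hfuneq ▸ hsum, ?_⟩
    calc ⟪p T, w v T⟫ + p0 * w0 v T
        = (∫ s, (⟪-(gradient (fun y => ⟪p s, f y (u s) s⟫) (x s))
              - p0 • gradient (fun y => L y (u s) s) (x s), w v s⟫
            + ⟪p s, (fderiv ℝ (fun y => f y (u s) s) (x s)) (w v s)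
              + (fderiv ℝ (fun ω => f (x s) ω s) (u s)) (v s - u s)⟫) ∂μ)
          + ∫ s, (p0 * (⟪gradient (fun y => L y (u s) s) (x s), w v s⟫
            + ⟪gradient (fun ω => L (x s) ω s) (u s), v s - u s⟫)) ∂μ := by
          rw [hparts, hw0T]
      _ = ∫ s, ((⟪-(gradient (fun y => ⟪p s, f y (u s) s⟫) (x s))
              - p0 • gradient (fun y => L y (u s) s) (x s), w v s⟫
            + ⟪p s, (fderiv ℝ (fun y => f y (u s) s) (x s)) (w v s)
              + (fderiv ℝ (fun ω => f (x s) ω s) (u s)) (v s - u s)⟫)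
          + p0 * (⟪gradient (fun y => L y (u s) s) (x s), w v s⟫
            + ⟪gradient (fun ω => L (x s) ω s) (u s), v s - u s⟫)) ∂μ :=
          (integral_add (hPw.add hpW) (hW0v.const_mul p0)).symm
      _ = ∫ s, ⟪gradient (fun ψ => ⟪p s, f (x s) ψ s⟫
            + p0 * L (x s) ψ s) (u s), v s - u s⟫ ∂μ := by rw [hfuneq]
  constructor
  · -- gradient condition ⟹ variational inequality
    intro h1 v hv
    obtain ⟨hgint, hid⟩ := key v hv
    obtain ⟨hvm, hvU, _⟩ := (hLinfU v).1 hv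
    rw [hid]
    refine integral_nonpos_of_ae ?_
    have h1' : ∀ᵐ t ∂μ, ∀ ω ∈ U,
        ⟪gradient (fun ψ => ⟪p t, f (x t) ψ t⟫ + p0 * L (x t) ψ t) (u t), ω - u t⟫ ≤ 0 :=
      hmeq ▸ h1
    have hvU' : ∀ᵐ t ∂μ, v t ∈ U := hmeq ▸ hvU
    filter_upwards [h1', hvU'] with t ht hvt
    exact ht (v t) hvt
  · -- variational inequality ⟹ gradient condition
    intro h2
    rw [hmeq]
    have haemain : ∀ ω ∈ U, ∀ᵐ t ∂μ,
        ⟪gradient (fun ψ => ⟪p t, f (x t) ψ t⟫ + p0 * L (x t) ψ t) (u t), ω - u t⟫ ≤ 0 := by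
      intro ω hω
      have hvconst : LinfU (fun _ => ω) := (hLinfU _).2 ⟨aestronglyMeasurable_const,
        Eventually.of_forall fun _ => hω, ⟨‖ω‖, Eventually.of_forall fun _ => le_rfl⟩⟩
      have hgint : Integrable (fun s =>
          ⟪gradient (fun ψ => ⟪p s, f (x s) ψ s⟫ + p0 * L (x s) ψ s) (u s), ω - u s⟫) μ :=
        (key _ hvconst).1
      have hneg : 0 ≤ᵐ[μ] fun s =>
          -⟪gradient (fun ψ => ⟪p s, f (x s) ψ s⟫ + p0 * L (x s) ψ s) (u s), ω - u s⟫ := by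
        refine ae_nonneg_of_forall_setIntegral_nonneg hgint.neg ?_
        intro t ht hμt
        rw [integral_neg, neg_nonneg]
        have hvE : LinfU (fun s => if s ∈ t then ω else u s) := by
          refine (hLinfU _).2 ⟨?_, ?_, ?_⟩
          · obtain ⟨u', hu'sm, hu'eq⟩ := hum
            refine ⟨t.piecewise (fun _ => ω) u',
              StronglyMeasurable.piecewise ht stronglyMeasurable_const hu'sm, ?_⟩
            filter_upwards [hu'eq] with s hs
            by_cases h : s ∈ t <;> simp [Set.piecewise, h, hs]
          · filter_upwards [huU] with s hs
            by_cases h : s ∈ t <;> simp [h, hω, hs]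
          · refine ⟨max Mu ‖ω‖, ?_⟩
            filter_upwards [huM] with s hs
            by_cases h : s ∈ t
            · simp only [h, if_true]; exact le_max_right _ _
            · simp only [h, if_false]; exact hs.trans (le_max_left _ _)
        obtain ⟨hiE, hidE⟩ := key _ hvE
        have hle := h2 _ hvE
        rw [hidE] at hle
        have heq : (fun s => ⟪gradient (fun ψ => ⟪p s, f (x s) ψ s⟫
              + p0 * L (x s) ψ s) (u s), (if s ∈ t then ω else u s) - u s⟫)
            = t.indicator (fun s => ⟪gradient (fun ψ => ⟪p s, f (x s) ψ s⟫
              + p0 * L (x s) ψ s) (u s), ω - u s⟫) := by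
          funext s
          by_cases h : s ∈ t <;> simp [Set.indicator_apply, h]
        rw [heq, hμdef, setIntegral_indicator ht] at hle
        rw [hμdef, Measure.restrict_restrict ht, Set.inter_comm]
        exact hle
      filter_upwards [hneg] with s hs
      have : (0:ℝ) ≤ -⟪gradient (fun ψ => ⟪p s, f (x s) ψ s⟫
          + p0 * L (x s) ψ s) (u s), ω - u s⟫ := hs
      linarith
    obtain ⟨c0, hc0count, hc0dense⟩ := TopologicalSpace.exists_countable_dense (↥U)
    have hccount : (Subtype.val '' c0).Countable := hc0count.image _
    have hcsub : (Subtype.val '' c0) ⊆ U := by rintro _ ⟨d, _, rfl⟩; exact d.2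
    have hUclos : U ⊆ closure (Subtype.val '' c0) := by
      intro ω hω
      have h3 : (⟨ω, hω⟩ : ↥U) ∈ closure c0 := hc0dense _
      exact image_closure_subset_closure_image continuous_subtype_val ⟨⟨ω, hω⟩, h3, rfl⟩
    have hc' : ∀ᵐ t ∂μ, ∀ ω ∈ (Subtype.val '' c0),
        ⟪gradient (fun ψ => ⟪p t, f (x t) ψ t⟫ + p0 * L (x t) ψ t) (u t), ω - u t⟫ ≤ 0 :=
      (ae_ball_iff hccount).2 fun ω hω => haemain ω (hcsub hω)
    filter_upwards [hc'] with t ht ω hω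
    have hS : IsClosed {ψ : EuclideanSpace ℝ (Fin m) |
        ⟪gradient (fun ψ' => ⟪p t, f (x t) ψ' t⟫ + p0 * L (x t) ψ' t) (u t), ψ - u t⟫ ≤ 0} :=
      isClosed_le (Continuous.inner continuous_const (continuous_id.sub continuous_const))
        continuous_const
    exact (hS.closure_subset_iff.2 fun d hd => ht d hd) (hUclos hω)
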